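/- Let $n \geq 1$ and let $A_1,\dots,A_n$ be real numbers with $\sum_{i=1}^n A_i = 2$. Define $C = \tfrac{1}{8}\sum_{i=1}^n A_i^2 - \tfrac{1}{2}$, and set $p_0 = \tfrac{C}{C+1}$ and $p_i = \tfrac{A_i}{2(C+1)}$ for $i=1,\dots,n$. Then $C+1 > 0$, and the Kasner conditions hold: $\sum_{i=0}^{n} p_i = 1$ and $\sum_{i=0}^{n} p_i^2 = 1$. -/

import Mathlib

/-- **Kasner conditions for the soliton asymptotics.**
Let `n ≥ 1` and `A₁, …, Aₙ` real with `∑ Aᵢ = 2`. With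
`C = (1/8) ∑ Aᵢ² - 1/2`, `p₀ = C/(C+1)` and `pᵢ = Aᵢ/(2(C+1))`,
we have `C + 1 > 0` and the Kasner conditions `∑ pᵢ = 1`, `∑ pᵢ² = 1`. -/
theorem kasner_conditions (n : ℕ) (hn : 1 ≤ n) (A : Fin n → ℝ)
    (hA : ∑ i, A i = 2)
    (C : ℝ) (hC : C = (1 / 8) * (∑ i, (A i) ^ 2) - 1 / 2)
    (p : Fin (n + 1) → ℝ)
    (hp0 : p 0 = C / (C + 1))
    (hpi : ∀ i : Fin n, p i.succ = A i / (2 * (C + 1))) :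
    0 < C + 1 ∧ (∑ i, p i) = 1 ∧ (∑ i, (p i) ^ 2) = 1 := by
  have hsq : (0:ℝ) ≤ ∑ i, (A i) ^ 2 :=
    Finset.sum_nonneg fun i _ => sq_nonneg _
  have hpos : 0 < C + 1 := by rw [hC]; linarith
  have hne : C + 1 ≠ 0 := ne_of_gt hpos
  have hS : ∑ i, (A i) ^ 2 = 8 * C + 4 := by rw [hC]; ring
  refine ⟨hpos, ?_, ?_⟩
  · rw [Fin.sum_univ_succ, hp0]
    have : ∑ i : Fin n, p i.succ = ∑ i : Fin n, A i / (2 * (C + 1)) :=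
      Finset.sum_congr rfl fun i _ => hpi i
    rw [this, ← Finset.sum_div, hA]
    field_simp
  · rw [Fin.sum_univ_succ, hp0]
    have : ∑ i : Fin n, (p i.succ) ^ 2
        = ∑ i : Fin n, (A i) ^ 2 / (2 * (C + 1)) ^ 2 := by
      refine Finset.sum_congr rfl fun i _ => ?_
      rw [hpi i, div_pow]
    rw [this, ← Finset.sum_div, hS]
    field_simp
    ring
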